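/- Let α, β, γ be commutative ring elements and define P_n by P_0=1, P_1=x-(α+β), P_n=(x-α)P_{n-1}(x)-β(x-γ)P_{n-2}(x). Then the coefficient array of the P_n is the Riordan array ((1-βx)/(1+αx-βγx^2), x(1-βx)/(1+αx-βγx^2)): for each n and k, [x^k]P_n(x) = [x^n]( (1-βx)/(1+αx-βγx^2) · (x(1-βx)/(1+αx-βγx^2))^k ). -/

import Mathlib

open PowerSeries

section Aux
variable {R : Type*} [CommRing R] (α β γ : R)

noncomputable def Dser : R⟦X⟧ := 1 + C α * X - C (β * γ) * X ^ 2
noncomputable def Dinv : R⟦X⟧ := (Dser α β γ).invOfUnit 1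
noncomputable def Aser (k : ℕ) : R⟦X⟧ :=
  (1 - C β * X) * Dinv α β γ * (X * (1 - C β * X) * Dinv α β γ) ^ k

lemma hDinv : Dser α β γ * Dinv α β γ = 1 :=
  PowerSeries.mul_invOfUnit _ _ (by simp [Dser])

lemma hDA0 : Dser α β γ * Aser α β γ 0 = 1 - C β * X := by
  unfold Aser
  rw [pow_zero, mul_one]
  linear_combination (1 - C β * X) * hDinv α β γ

lemma hDAS (k : ℕ) : Dser α β γ * Aser α β γ (k + 1)
    = X * ((1 - C β * X) * Aser α β γ k) := by
  unfold Aser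
  rw [pow_succ]
  linear_combination (X * (1 - C β * X) * ((1 - C β * X) * Dinv α β γ) *
    (X * (1 - C β * X) * Dinv α β γ) ^ k) * hDinv α β γ

lemma coeffD (n : ℕ) (A : R⟦X⟧) : (coeff (n + 2)) (Dser α β γ * A)
    = coeff (n + 2) A + α * coeff (n + 1) A - β * γ * coeff n A := by
  have h1 : Dser α β γ * A = A + C α * (X * A) - C (β * γ) * (X ^ 2 * A) := by
    unfold Dser; ring
  rw [h1, map_sub, map_add, coeff_C_mul, coeff_C_mul, coeff_succ_X_mul,
    coeff_X_pow_mul]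

lemma hA0c (k : ℕ) : (constantCoeff) (Aser α β γ k) = if k = 0 then 1 else 0 := by
  cases k with
  | zero =>
    have := congrArg (constantCoeff) (hDA0 α β γ)
    simp only [map_mul, map_sub, map_one, constantCoeff_C, constantCoeff_X, mul_zero,
      sub_zero, Dser, map_add, constantCoeff_one, map_pow, if_pos rfl] at this ⊢
    simpa using this
  | succ k =>
    simp [Aser, pow_succ, map_mul, constantCoeff_X]

lemma coeffD1 (A : R⟦X⟧) : (coeff 1) (Dser α β γ * A)
    = coeff 1 A + α * constantCoeff A := by
  have h1 : Dser α β γ * A = A + C α * (X * A) - C (β * γ) * (X ^ 2 * A) := by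
    unfold Dser; ring
  have h2 : (coeff 1) (X ^ 2 * A) = 0 := by
    rw [coeff_X_pow_mul']; simp
  rw [h1, map_sub, map_add, coeff_C_mul, coeff_C_mul, h2, mul_zero, sub_zero,
    show (1 : ℕ) = 0 + 1 from rfl, coeff_succ_X_mul, coeff_zero_eq_constantCoeff]

lemma hA1c (k : ℕ) : (coeff 1) (Aser α β γ k)
    = if k = 0 then -(α + β) else if k = 1 then 1 else 0 := by
  cases k with
  | zero =>
    have h := congrArg (coeff 1) (hDA0 α β γ)
    rw [coeffD1, hA0c] at h
    simp only [if_pos rfl, mul_one, map_sub, map_one, coeff_one, coeff_C_mul, coeff_X] at h ⊢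
    norm_num at h ⊢
    linear_combination h
  | succ k =>
    have h := congrArg (coeff 1) (hDAS α β γ k)
    rw [coeffD1, hA0c, show (1 : ℕ) = 0 + 1 from rfl, coeff_succ_X_mul,
      coeff_zero_eq_constantCoeff, map_mul, hA0c] at h
    simp only [Nat.succ_ne_zero, if_false, mul_zero, add_zero, map_sub, map_mul, map_one,
      constantCoeff_C, constantCoeff_X, mul_zero, sub_zero, one_mul] at h
    rw [h]
    cases k <;> simp

lemma hArec0 (n : ℕ) : coeff (n + 2) (Aser α β γ 0)
    = -α * coeff (n + 1) (Aser α β γ 0) + β * γ * coeff n (Aser α β γ 0) := by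
  have h := congrArg (coeff (n + 2)) (hDA0 α β γ)
  rw [coeffD] at h
  rw [show ((1 : R⟦X⟧) - C β * X) = 1 - C β * X from rfl, map_sub, coeff_C_mul, coeff_X,
    if_neg (by omega : ¬ n + 2 = 1), coeff_one, if_neg (by omega : ¬ n + 2 = 0)] at h
  linear_combination h

lemma hArecS (n k : ℕ) : coeff (n + 2) (Aser α β γ (k + 1))
    = coeff (n + 1) (Aser α β γ k) - β * coeff n (Aser α β γ k)
      - α * coeff (n + 1) (Aser α β γ (k + 1)) + β * γ * coeff n (Aser α β γ (k + 1)) := by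
  have h := congrArg (coeff (n + 2)) (hDAS α β γ k)
  rw [coeffD, coeff_succ_X_mul, sub_mul, one_mul, map_sub, mul_assoc (C β),
    coeff_C_mul, coeff_succ_X_mul] at h
  linear_combination h

end Aux

theorem generalized_coeff_array {R : Type*} [CommRing R] (α β γ : R)
    (P : ℕ → Polynomial R)
    (hP0 : P 0 = 1)
    (hP1 : P 1 = Polynomial.X - Polynomial.C (α + β))
    (hPrec : ∀ n, P (n + 2) =
      (Polynomial.X - Polynomial.C α) * P (n + 1)
        - Polynomial.C β * (Polynomial.X - Polynomial.C γ) * P n) :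
    ∀ n k : ℕ, (P n).coeff k =
      PowerSeries.coeff n
        (((1 - PowerSeries.C β * PowerSeries.X) *
            PowerSeries.invOfUnit
              (1 + PowerSeries.C α * PowerSeries.X
                 - PowerSeries.C (β * γ) * PowerSeries.X ^ 2) 1) *
          (PowerSeries.X * (1 - PowerSeries.C β * PowerSeries.X) *
            PowerSeries.invOfUnit
              (1 + PowerSeries.C α * PowerSeries.X
                 - PowerSeries.C (β * γ) * PowerSeries.X ^ 2) 1) ^ k) := by
  have main : ∀ n k, (P n).coeff k = coeff n (Aser α β γ k) := by
    intro n
    induction n using Nat.twoStepInduction with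
    | zero =>
      intro k
      rw [hP0, coeff_zero_eq_constantCoeff, hA0c]
      simp [Polynomial.coeff_one]
    | one =>
      intro k
      rw [hP1, hA1c]
      rcases k with _ | _ | k <;> simp [Polynomial.coeff_X]
    | more n ih1 ih2 =>
      intro k
      rw [hPrec]
      cases k with
      | zero =>
        rw [hArec0, ← ih1 0, ← ih2 0]
        simp only [Polynomial.coeff_sub, Polynomial.mul_coeff_zero, Polynomial.coeff_X_zero,
          Polynomial.coeff_C_zero]
        ring
      | succ k =>
        rw [hArecS, ← ih1 k, ← ih1 (k + 1), ← ih2 k, ← ih2 (k + 1)]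
        simp only [Polynomial.coeff_sub, sub_mul, mul_assoc, Polynomial.coeff_X_mul,
          Polynomial.coeff_C_mul, mul_sub]
        ring
  exact fun n k => main n k
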